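/- Let (X, d) be a finite metric space, ρ > 0, δ ∈ (0, 1], and suppose there is a finitely supported probability measure μ on partitions of X such that: (1) every block C of every partition P in the support of μ has diam(C) ≤ ρ; and (2) for every x ∈ X, E_{P ∼ μ}[ d(x, X ∖ C_P(x)) ] ≥ δρ, where C_P(x) is the block of P containing x and d(x, ∅) is interpreted as ρ. Then there exist a Hilbert space H and a map φ : X → H such that for all x, y ∈ X: ‖φ(x) − φ(y)‖ ≤ 2·min{d(x,y), ρ}, and if d(x,y) > ρ then ‖φ(x) − φ(y)‖ ≥ δρ. -/

import Mathlib

open scoped Classical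

private lemma sum_restrict_pair {X : Type} [Fintype X] [DecidableEq X] (F : X → ℝ) (u v : X)
    (h : ∀ z, z ≠ u → z ≠ v → F z = 0) : ∑ z, F z = ∑ z ∈ ({u, v} : Finset X), F z :=
  (Finset.sum_subset (Finset.subset_univ _) fun z _ hz => by
    simp only [Finset.mem_insert, Finset.mem_singleton, not_or] at hz
    exact h z hz.1 hz.2).symm

private lemma sum_two_ite {X : Type} [Fintype X] [DecidableEq X] (u v : X) (p q : ℝ) :
    ∑ z : X, ((if u = z then p else 0) - (if v = z then q else 0))^2
      = if u = v then (p - q)^2 else p^2 + q^2 := by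
  rcases eq_or_ne u v with h | h
  · subst h
    rw [if_pos rfl]
    have h1 : ∀ z : X, ((if u = z then p else 0) - (if u = z then q else 0))^2
        = if u = z then (p - q)^2 else 0 := by
      intro z; by_cases hz : u = z <;> simp [hz]
    rw [Finset.sum_congr rfl fun z _ => h1 z, Finset.sum_ite_eq]
    simp
  · rw [if_neg h]
    have h1 : ∀ z : X, ((if u = z then p else 0) - (if v = z then q else 0))^2
        = (if u = z then p^2 else 0) + (if v = z then q^2 else 0) := by
      intro z
      by_cases hz : u = z <;> by_cases hz' : v = z
      · exact absurd (hz.trans hz'.symm) h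
      · simp [hz, hz']
      · simp [hz, hz']
      · simp [hz, hz']
    rw [Finset.sum_congr rfl fun z _ => h1 z, Finset.sum_add_distrib,
      Finset.sum_ite_eq, Finset.sum_ite_eq]
    simp

private lemma quad_bound {m a b : ℝ} (ha : 0 ≤ a) (hb : 0 ≤ b) (ham : a ≤ m) (hbm : b ≤ m) :
    (a - b)^2 + (a^2 + b^2) ≤ 2*m^2 := by
  nlinarith [mul_nonneg ha (sub_nonneg.2 ham), mul_nonneg hb (sub_nonneg.2 hbm),
    mul_nonneg (sub_nonneg.2 ham) (sub_nonneg.2 hbm)]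

private lemma sq_add_sq_le' {m a b : ℝ} (ha : 0 ≤ a) (hb : 0 ≤ b) (h : a + b ≤ m) :
    a^2 + b^2 ≤ m^2 := by nlinarith [mul_nonneg ha hb]


/-- (Rao's embedding lemma, one scale.)  Let `(X, d)` be a finite
metric space, `ρ > 0`, `δ ∈ (0,1]`, and suppose there is a finitely supported probability
distribution (here: finitely many partitions `c i` with weights `wt i`) over partitions
of `X` into blocks of diameter at most `ρ` such that every point `x` satisfies
`E[d(x, X ∖ C(x))] ≥ δρ` (where `d(x, ∅) := ρ`).  A partition is encoded by the map
`c i : X → Set X` sending a point to its block.  Then there are a Hilbert space `H` and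
`φ : X → H` with `‖φ x - φ y‖ ≤ 2 min (d(x,y)) ρ` for all `x, y`, and
`‖φ x - φ y‖ ≥ δρ` whenever `d(x,y) > ρ`. -/
theorem stmt_16 (X : Type) [MetricSpace X] [Fintype X] (ρ δ : ℝ)
    (hρ : 0 < ρ) (hδ0 : 0 < δ) (hδ1 : δ ≤ 1)
    (ι : Type) [Fintype ι] (wt : ι → ℝ) (c : ι → X → Set X)
    (hw0 : ∀ i, 0 ≤ wt i) (hw1 : ∑ i, wt i = 1)
    (hmem : ∀ i x, x ∈ c i x)
    (hpart : ∀ i x y, y ∈ c i x → c i y = c i x)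
    (hdiam : ∀ i x, Metric.diam (c i x) ≤ ρ)
    (hsep : ∀ x : X,
      δ * ρ ≤ ∑ i, wt i * (if (c i x)ᶜ = ∅ then ρ else Metric.infDist x (c i x)ᶜ)) :
    ∃ (H : Type) (_ : NormedAddCommGroup H) (_ : InnerProductSpace ℝ H)
      (_ : CompleteSpace H) (φ : X → H),
      ∀ x y : X,
        ‖φ x - φ y‖ ≤ 2 * min (dist x y) ρ ∧
        (ρ < dist x y → δ * ρ ≤ ‖φ x - φ y‖) := by
  classical
  letI : LinearOrder X := LinearOrder.lift' (Fintype.equivFin X) (Fintype.equivFin X).injective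
  set r : ℝ := ρ / 2 with hrdef
  have hr0 : 0 < r := by positivity
  set a : ι → X → ℝ := fun i x => if (c i x)ᶜ = ∅ then ρ else Metric.infDist x (c i x)ᶜ with hadef
  set g : ι → X → ℝ := fun i x => min (a i x) ρ with hgdef
  have hsep' : ∀ x, δ * ρ ≤ ∑ i, wt i * a i x := by
    intro x; simpa only [hadef] using hsep x
  have ha0 : ∀ i x, 0 ≤ a i x := by
    intro i x; rw [hadef]; dsimp only; split
    · exact hρ.le
    · exact Metric.infDist_nonneg
  have hg0 : ∀ i x, 0 ≤ g i x := fun i x => le_min (ha0 i x) hρ.le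
  have hgρ : ∀ i x, g i x ≤ ρ := fun i x => min_le_right _ _
  have hbounded : ∀ i x, Bornology.IsBounded (c i x) := fun i x => (Set.toFinite _).isBounded
  have hblock : ∀ i x y, y ∈ c i x → dist x y ≤ ρ := fun i x y hy =>
    (Metric.dist_le_diam_of_mem (hbounded i x) (hmem i x) hy).trans (hdiam i x)
  -- Lipschitz property of a on a common block
  have ha_lip : ∀ i x y, c i x = c i y → |a i x - a i y| ≤ dist x y := by
    intro i x y h
    rw [hadef]; dsimp only; rw [h]
    split
    · simp [dist_nonneg]
    · rw [abs_sub_le_iff]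
      constructor
      · have := Metric.infDist_le_infDist_add_dist (x := x) (y := y) (s := (c i y)ᶜ)
        linarith
      · have := Metric.infDist_le_infDist_add_dist (x := y) (y := x) (s := (c i y)ᶜ)
        rw [dist_comm] at this; linarith
  have hg_lip : ∀ i x y, c i x = c i y → |g i x - g i y| ≤ min (dist x y) ρ := by
    intro i x y h
    refine le_min ?_ ?_
    · have habs := abs_le.1 (ha_lip i x y h)
      rw [hgdef]; dsimp only
      rcases le_total (a i x) ρ with h1 | h1 <;> rcases le_total (a i y) ρ with h2 | h2 <;>
        rw [abs_le] <;>
        constructor <;>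
        simp only [min_eq_left, min_eq_right, h1, h2] <;>
        nlinarith [ha0 i x, ha0 i y]
    · have h1 := hg0 i x; have h2 := hg0 i y; have h3 := hgρ i x; have h4 := hgρ i y
      rw [abs_le]; constructor <;> linarith
  -- if blocks differ, g is small
  have hg_small : ∀ i x y, y ∉ c i x → g i x ≤ min (dist x y) ρ := by
    intro i x y hy
    refine le_min ?_ (hgρ i x)
    have hyc : y ∈ (c i x)ᶜ := hy
    have hne : ¬ (c i x)ᶜ = ∅ := fun h => by rw [h] at hyc; exact hyc
    have : a i x ≤ dist x y := by
      rw [hadef]; dsimp only; rw [if_neg hne]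
      exact Metric.infDist_le_dist_of_mem hyc
    exact le_trans (min_le_left _ _) this
  -- block representative
  have hne : ∀ i x, ((c i x).toFinite.toFinset).Nonempty :=
    fun i x => ⟨x, (Set.Finite.mem_toFinset _).2 (hmem i x)⟩
  set rep : ι → X → X := fun i x => ((c i x).toFinite.toFinset).min' (hne i x) with hrepdef
  have hmin'_congr : ∀ (s t : Finset X) (hs : s.Nonempty) (ht : t.Nonempty), s = t →
      s.min' hs = t.min' ht := by rintro s t hs ht rfl; rfl
  have hrep_mem : ∀ i x, rep i x ∈ c i x := by
    intro i x
    have := Finset.min'_mem ((c i x).toFinite.toFinset) (hne i x)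
    rw [Set.Finite.mem_toFinset] at this
    exact this
  have hrep_iff : ∀ i x y, rep i x = rep i y ↔ c i x = c i y := by
    intro i x y
    constructor
    · intro h
      have h1 := hrep_mem i x
      have h2 := hrep_mem i y
      rw [h] at h1
      rw [← hpart i x (rep i y) h1, ← hpart i y (rep i y) h2]
    · intro h
      rw [hrepdef]; dsimp only
      exact hmin'_congr _ _ _ _ (by ext z; simp [Set.Finite.mem_toFinset, h])
  -- the cluster structure
  set S : X → Prop := fun x => ∀ u v, dist x u ≤ ρ → dist x v ≤ ρ → dist u v ≤ ρ with hSdef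
  have hPS : ∀ x, (δ * ρ ≤ ∑ i, wt i * g i x) ∨ S x := by
    intro x
    by_cases hall : ∀ i, a i x ≤ ρ
    · left
      have h1 : ∀ i, g i x = a i x := fun i => min_eq_left (hall i)
      calc δ * ρ ≤ ∑ i, wt i * a i x := hsep' x
        _ = ∑ i, wt i * g i x := by simp only [h1]
    · right
      push_neg at hall
      obtain ⟨i, hi⟩ := hall
      have hcomp : ¬ (c i x)ᶜ = ∅ := by
        intro h; rw [hadef] at hi; dsimp only at hi; rw [if_pos h] at hi; exact lt_irrefl _ hi
      have hlt : ρ < Metric.infDist x (c i x)ᶜ := by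
        rw [hadef] at hi; dsimp only at hi; rwa [if_neg hcomp] at hi
      intro u v hu hv
      have hmemball : ∀ w, dist x w ≤ ρ → w ∈ c i x := by
        intro w hw
        by_contra hwc
        have : Metric.infDist x (c i x)ᶜ ≤ dist x w := Metric.infDist_le_dist_of_mem hwc
        linarith
      exact (Metric.dist_le_diam_of_mem (hbounded i x) (hmemball u hu) (hmemball v hv)).trans
        (hdiam i x)
  -- cluster finsets
  set KF : X → Finset X := fun z => Finset.univ.filter (fun w => S w ∧ dist z w ≤ ρ) with hKFdef
  have hKF_mem : ∀ z w, w ∈ KF z ↔ (S w ∧ dist z w ≤ ρ) := by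
    intro z w; rw [hKFdef]; simp
  have hKF_self : ∀ z, S z → z ∈ KF z := by
    intro z hz; rw [hKF_mem]; exact ⟨hz, by simp [hρ.le]⟩
  have hKF_eq : ∀ x z, S x → S z → dist x z ≤ ρ → KF x = KF z := by
    intro x z hx hz hxz
    ext w
    rw [hKF_mem, hKF_mem]
    constructor
    · rintro ⟨hw, hdw⟩; exact ⟨hw, hx z w hxz hdw⟩
    · rintro ⟨hw, hdw⟩
      refine ⟨hw, hz x w ?_ hdw⟩
      rw [dist_comm]; exact hxz
  set ψ : X → X → ℝ := fun z u => max 0 (r - Metric.infDist u (↑(KF z) : Set X)) with hψdef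
  set L : X → Prop := fun z => S z ∧ ∀ w ∈ KF z, z ≤ w with hLdef
  have hLS : ∀ z, L z → S z := fun z hz => hz.1
  have hL_uniq : ∀ z z', L z → L z' → KF z = KF z' → z = z' := by
    intro z z' hz hz' h
    exact le_antisymm (hz.2 z' (h ▸ hKF_self z' hz'.1)) (hz'.2 z (h.symm ▸ hKF_self z hz.1))
  have hlead : ∀ x, S x → ∃ z, L z ∧ x ∈ KF z ∧ KF z = KF x := by
    intro x hx
    have hxK := hKF_self x hx
    set z := (KF x).min' ⟨x, hxK⟩ with hzdef
    have hzK : z ∈ KF x := Finset.min'_mem _ _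
    obtain ⟨hzS, hzd⟩ := (hKF_mem x z).1 hzK
    have hEq : KF z = KF x := (hKF_eq x z hx hzS hzd).symm
    refine ⟨z, ⟨hzS, ?_⟩, ?_, hEq⟩
    · intro w hw; rw [hEq] at hw; exact Finset.min'_le _ _ hw
    · rw [hEq]; exact hxK
  have hfarKK : ∀ z z', L z → L z' → z ≠ z' →
      ∀ w ∈ KF z, ∀ w' ∈ KF z', ρ < dist w w' := by
    intro z z' hz hz' hne12 w hw w' hw'
    by_contra hcon
    push_neg at hcon
    obtain ⟨hwS, hwd⟩ := (hKF_mem z w).1 hw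
    obtain ⟨hw'S, hw'd⟩ := (hKF_mem z' w').1 hw'
    have e1 : KF z = KF w := hKF_eq z w hz.1 hwS hwd
    have e2 : KF w = KF w' := hKF_eq w w' hwS hw'S hcon
    have e3 : KF z' = KF w' := hKF_eq z' w' hz'.1 hw'S hw'd
    exact hne12 (hL_uniq z z' hz hz' (e1.trans (e2.trans e3.symm)))
  have hKFne : ∀ z, L z → ((↑(KF z) : Set X)).Nonempty := by
    intro z hz; exact ⟨z, hKF_self z hz.1⟩
  -- ψ basic facts
  have hψ0 : ∀ z u, 0 ≤ ψ z u := by intro z u; rw [hψdef]; exact le_max_left _ _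
  have hψr : ∀ z u, ψ z u ≤ r := by
    intro z u; rw [hψdef]; dsimp only
    have := Metric.infDist_nonneg (s := (↑(KF z) : Set X)) (x := u)
    exact max_le hr0.le (by linarith)
  have hψ_lip : ∀ z u v, |ψ z u - ψ z v| ≤ dist u v := by
    intro z u v
    rw [hψdef]; dsimp only
    have h1 : |max 0 (r - Metric.infDist u (↑(KF z) : Set X))
        - max 0 (r - Metric.infDist v (↑(KF z) : Set X))|
        ≤ |(r - Metric.infDist u (↑(KF z) : Set X)) - (r - Metric.infDist v (↑(KF z) : Set X))| := by
      rw [max_comm 0 _, max_comm 0 _]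
      exact abs_max_sub_max_le_abs _ _ _
    refine h1.trans ?_
    have h2 := Metric.infDist_le_infDist_add_dist (x := u) (y := v) (s := (↑(KF z) : Set X))
    have h3 := Metric.infDist_le_infDist_add_dist (x := v) (y := u) (s := (↑(KF z) : Set X))
    rw [dist_comm v u] at h3
    rw [abs_sub_le_iff]
    constructor <;> linarith
  have hψ_lip' : ∀ z u v, |ψ z u - ψ z v| ≤ min (dist u v) ρ := by
    intro z u v
    refine le_min (hψ_lip z u v) ?_
    have h1 := hψ0 z u; have h2 := hψ0 z v; have h3 := hψr z u; have h4 := hψr z v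
    rw [abs_le]; constructor <;> [linarith [hrdef]; linarith [hrdef]]
  have hψ_pos : ∀ z u, 0 < ψ z u → Metric.infDist u (↑(KF z) : Set X) < r := by
    intro z u h
    rw [hψdef] at h; dsimp only at h
    by_contra hcon
    push_neg at hcon
    rw [max_eq_left (by linarith)] at h
    exact lt_irrefl _ h
  have hψ_eq : ∀ z u, 0 < ψ z u → ψ z u = r - Metric.infDist u (↑(KF z) : Set X) := by
    intro z u h
    have := hψ_pos z u h
    rw [hψdef]; dsimp only
    exact max_eq_right (by linarith)
  have huniq : ∀ u z z', L z → L z' → 0 < ψ z u → 0 < ψ z' u → z = z' := by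
    intro u z z' hz hz' h1 h2
    by_contra hne12
    obtain ⟨w, hw, hwd⟩ := (Metric.infDist_lt_iff (hKFne z hz)).1 (hψ_pos z u h1)
    obtain ⟨w', hw', hw'd⟩ := (Metric.infDist_lt_iff (hKFne z' hz')).1 (hψ_pos z' u h2)
    have := hfarKK z z' hz hz' hne12 w (Finset.mem_coe.1 hw) w' (Finset.mem_coe.1 hw')
    have htri := dist_triangle w u w'
    rw [dist_comm w u] at htri
    rw [hrdef] at hwd hw'd
    linarith
  have hψ_self : ∀ x z, x ∈ KF z → ψ z x = r := by
    intro x z hx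
    rw [hψdef]; dsimp only
    rw [Metric.infDist_zero_of_mem (Finset.mem_coe.2 hx)]
    simp [hr0.le]
  have hψ_far : ∀ x y z, L z → x ∈ KF z → ρ < dist x y → ψ z y = 0 := by
    intro x y z hz hx hfar
    have hS_z := hz.1
    obtain ⟨hxS, hxd⟩ := (hKF_mem z x).1 hx
    have hbig : ∀ w ∈ KF z, ρ < dist y w := by
      intro w hw
      obtain ⟨hwS, hwd⟩ := (hKF_mem z w).1 hw
      by_contra hcon
      push_neg at hcon
      have hxw : dist x w ≤ ρ := hS_z x w hxd hwd
      have : dist x y ≤ ρ := hwS x y (by rw [dist_comm]; exact hxw) (by rw [dist_comm]; exact hcon)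
      linarith
    obtain ⟨w, hw, hwd⟩ := ((↑(KF z) : Set X).toFinite.isCompact).exists_infDist_eq_dist
      ⟨x, Finset.mem_coe.2 hx⟩ y
    have := hbig w (Finset.mem_coe.1 hw)
    rw [hψdef]; dsimp only
    rw [max_eq_left]
    rw [hwd, hrdef]
    linarith
  -- key separation inequality for two distinct leads
  have hAB : ∀ x y z1 z2, L z1 → L z2 → z1 ≠ z2 → 0 < ψ z1 x → 0 < ψ z2 y →
      ψ z1 x + ψ z2 y ≤ min (dist x y) ρ := by
    intro x y z1 z2 hz1 hz2 h12 h1 h2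
    have hrr : 2 * r = ρ := by rw [hrdef]; ring
    refine le_min ?_ ?_
    · obtain ⟨w1, hw1, hw1d⟩ := ((↑(KF z1) : Set X).toFinite.isCompact).exists_infDist_eq_dist
        (hKFne z1 hz1) x
      obtain ⟨w2, hw2, hw2d⟩ := ((↑(KF z2) : Set X).toFinite.isCompact).exists_infDist_eq_dist
        (hKFne z2 hz2) y
      have hfar := hfarKK z1 z2 hz1 hz2 h12 w1 (Finset.mem_coe.1 hw1) w2 (Finset.mem_coe.1 hw2)
      have e1 := hψ_eq z1 x h1
      have e2 := hψ_eq z2 y h2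
      have htri : dist w1 w2 ≤ dist w1 x + dist x y + dist y w2 := dist_triangle4 w1 x y w2
      rw [dist_comm w1 x] at htri
      rw [e1, e2, hw1d, hw2d]
      linarith
    · have q1 := hψr z1 x; have q2 := hψr z2 y; linarith
  -- upper bound for the cluster part
  have hQ2up : ∀ x y : X, (∑ z, ((if L z then Real.sqrt 2 * ψ z x else 0)
      - (if L z then Real.sqrt 2 * ψ z y else 0))^2) ≤ 2 * (min (dist x y) ρ)^2 := by
    intro x y
    have hm0 : 0 ≤ min (dist x y) ρ := le_min dist_nonneg hρ.le
    have hLval : ∀ z, ((if L z then Real.sqrt 2 * ψ z x else 0)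
        - (if L z then Real.sqrt 2 * ψ z y else 0))^2
        = if L z then 2*(ψ z x - ψ z y)^2 else 0 := by
      intro z
      by_cases hz : L z
      · rw [if_pos hz, if_pos hz, if_pos hz]
        have h : (Real.sqrt 2 * ψ z x - Real.sqrt 2 * ψ z y)^2
            = (Real.sqrt 2)^2 * (ψ z x - ψ z y)^2 := by ring
        rw [h, Real.sq_sqrt (by norm_num : (0:ℝ) ≤ 2)]
      · simp [hz]
    have hbnd1 : ∀ z, (if L z then 2*(ψ z x - ψ z y)^2 else 0) ≤ 2 * (min (dist x y) ρ)^2 := by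
      intro z
      by_cases hz : L z
      · rw [if_pos hz]
        have h := hψ_lip' z x y
        have h2 : (ψ z x - ψ z y)^2 ≤ (min (dist x y) ρ)^2 := by
          rw [← sq_abs]; exact pow_le_pow_left₀ (abs_nonneg _) h 2
        linarith
      · rw [if_neg hz]; positivity
    rw [Finset.sum_congr rfl (fun z _ => hLval z)]
    by_cases hax : ∃ z, L z ∧ 0 < ψ z x
    · obtain ⟨z1, hz1L, hz1⟩ := hax
      by_cases hay : ∃ z, L z ∧ 0 < ψ z y
      · obtain ⟨z2, hz2L, hz2⟩ := hay
        have hvan : ∀ z, z ≠ z1 → z ≠ z2 →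
            (if L z then 2*(ψ z x - ψ z y)^2 else 0) = 0 := by
          intro z hne1 hne2
          by_cases hz : L z
          · rw [if_pos hz]
            have e1 : ψ z x = 0 := by
              by_contra h
              exact hne1 (huniq x z z1 hz hz1L ((hψ0 z x).lt_of_ne (Ne.symm h)) hz1)
            have e2 : ψ z y = 0 := by
              by_contra h
              exact hne2 (huniq y z z2 hz hz2L ((hψ0 z y).lt_of_ne (Ne.symm h)) hz2)
            rw [e1, e2]; ring
          · rw [if_neg hz]
        rw [sum_restrict_pair _ z1 z2 hvan]
        rcases eq_or_ne z1 z2 with h12 | h12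
        · subst h12
          rw [show ({z1, z1} : Finset X) = {z1} by simp, Finset.sum_singleton]
          exact hbnd1 z1
        · rw [Finset.sum_pair h12]
          have e1 : ψ z1 y = 0 := by
            by_contra h
            exact h12 (huniq y z1 z2 hz1L hz2L ((hψ0 z1 y).lt_of_ne (Ne.symm h)) hz2)
          have e2 : ψ z2 x = 0 := by
            by_contra h
            exact h12 ((huniq x z2 z1 hz2L hz1L ((hψ0 z2 x).lt_of_ne (Ne.symm h)) hz1).symm)
          rw [if_pos hz1L, if_pos hz2L, e1, e2]
          have hsum := hAB x y z1 z2 hz1L hz2L h12 hz1 hz2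
          have hq : (ψ z1 x)^2 + (ψ z2 y)^2 ≤ (min (dist x y) ρ)^2 :=
            sq_add_sq_le' (hψ0 z1 x) (hψ0 z2 y) hsum
          nlinarith [hq]
      · have hvan : ∀ z, z ≠ z1 → z ≠ z1 →
            (if L z then 2*(ψ z x - ψ z y)^2 else 0) = 0 := by
          intro z hne1 _
          by_cases hz : L z
          · rw [if_pos hz]
            have e1 : ψ z x = 0 := by
              by_contra h
              exact hne1 (huniq x z z1 hz hz1L ((hψ0 z x).lt_of_ne (Ne.symm h)) hz1)
            have e2 : ψ z y = 0 := by
              by_contra h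
              exact hay ⟨z, hz, (hψ0 z y).lt_of_ne (Ne.symm h)⟩
            rw [e1, e2]; ring
          · rw [if_neg hz]
        rw [sum_restrict_pair _ z1 z1 hvan,
          show ({z1, z1} : Finset X) = {z1} by simp, Finset.sum_singleton]
        exact hbnd1 z1
    · by_cases hay : ∃ z, L z ∧ 0 < ψ z y
      · obtain ⟨z2, hz2L, hz2⟩ := hay
        have hvan : ∀ z, z ≠ z2 → z ≠ z2 →
            (if L z then 2*(ψ z x - ψ z y)^2 else 0) = 0 := by
          intro z hne2 _
          by_cases hz : L z
          · rw [if_pos hz]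
            have e1 : ψ z x = 0 := by
              by_contra h
              exact hax ⟨z, hz, (hψ0 z x).lt_of_ne (Ne.symm h)⟩
            have e2 : ψ z y = 0 := by
              by_contra h
              exact hne2 (huniq y z z2 hz hz2L ((hψ0 z y).lt_of_ne (Ne.symm h)) hz2)
            rw [e1, e2]; ring
          · rw [if_neg hz]
        rw [sum_restrict_pair _ z2 z2 hvan,
          show ({z2, z2} : Finset X) = {z2} by simp, Finset.sum_singleton]
        exact hbnd1 z2
      · rw [Finset.sum_eq_zero]
        · positivity
        · intro z _
          by_cases hz : L z
          · rw [if_pos hz]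
            have e1 : ψ z x = 0 := by
              by_contra h
              exact hax ⟨z, hz, (hψ0 z x).lt_of_ne (Ne.symm h)⟩
            have e2 : ψ z y = 0 := by
              by_contra h
              exact hay ⟨z, hz, (hψ0 z y).lt_of_ne (Ne.symm h)⟩
            rw [e1, e2]; ring
          · rw [if_neg hz]
  -- lower bound for the cluster part
  have hQ2low : ∀ x y : X, S x → S y → ρ < dist x y →
      ρ^2 ≤ ∑ z, ((if L z then Real.sqrt 2 * ψ z x else 0)
        - (if L z then Real.sqrt 2 * ψ z y else 0))^2 := by
    intro x y hx hy hfar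
    obtain ⟨z1, hz1L, hxK1, _⟩ := hlead x hx
    obtain ⟨z2, hz2L, hyK2, _⟩ := hlead y hy
    have h12 : z1 ≠ z2 := by
      intro h
      obtain ⟨hz1S, hd1⟩ := (hKF_mem z1 x).1 hxK1
      obtain ⟨_, hd2⟩ := (hKF_mem z2 y).1 hyK2
      rw [← h] at hd2
      have := hz1L.1 x y hd1 hd2
      linarith
    have e1 : ψ z1 x = r := hψ_self x z1 hxK1
    have e2 : ψ z1 y = 0 := hψ_far x y z1 hz1L hxK1 hfar
    have e3 : ψ z2 y = r := hψ_self y z2 hyK2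
    have e4 : ψ z2 x = 0 := hψ_far y x z2 hz2L hyK2 (by rw [dist_comm]; exact hfar)
    have hsub : ∑ z ∈ ({z1, z2} : Finset X), ((if L z then Real.sqrt 2 * ψ z x else 0)
        - (if L z then Real.sqrt 2 * ψ z y else 0))^2
        ≤ ∑ z, ((if L z then Real.sqrt 2 * ψ z x else 0)
        - (if L z then Real.sqrt 2 * ψ z y else 0))^2 :=
      Finset.sum_le_sum_of_subset_of_nonneg (Finset.subset_univ _) (fun z _ _ => sq_nonneg _)
    rw [Finset.sum_pair h12, if_pos hz1L, if_pos hz1L, if_pos hz2L, if_pos hz2L, e1, e2, e3, e4] at hsub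
    have hs2 : (Real.sqrt 2)^2 = (2:ℝ) := Real.sq_sqrt (by norm_num)
    have hrr : 2 * r = ρ := by rw [hrdef]; ring
    have hval : (Real.sqrt 2 * r - Real.sqrt 2 * 0)^2 + (Real.sqrt 2 * 0 - Real.sqrt 2 * r)^2
        = ρ^2 := by
      have h : (Real.sqrt 2 * r - Real.sqrt 2 * 0)^2 + (Real.sqrt 2 * 0 - Real.sqrt 2 * r)^2
          = (Real.sqrt 2)^2 * (2 * r^2) := by ring
      rw [h, hs2, ← hrr]; ring
    linarith [hsub, hval.symm.le, hval.le]
  -- blocks always differ across a far pair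
  have hdiffblock : ∀ x y : X, ρ < dist x y → ∀ i, c i x ≠ c i y := by
    intro x y hfar i h
    have hy : y ∈ c i x := by rw [h]; exact hmem i y
    linarith [hblock i x y hy]
  -- Jensen / Cauchy--Schwarz
  have hJensen : ∀ x : X, δ * ρ ≤ ∑ i, wt i * g i x →
      (δ*ρ)^2 ≤ ∑ i, wt i * (g i x)^2 := by
    intro x hx
    have hCS := Finset.sum_mul_sq_le_sq_mul_sq Finset.univ (fun i => Real.sqrt (wt i))
      (fun i => Real.sqrt (wt i) * g i x)
    have h1 : ∀ i : ι, Real.sqrt (wt i) * (Real.sqrt (wt i) * g i x) = wt i * g i x := by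
      intro i; rw [← mul_assoc, Real.mul_self_sqrt (hw0 i)]
    have h2 : ∀ i : ι, (Real.sqrt (wt i))^2 = wt i := fun i => Real.sq_sqrt (hw0 i)
    have h3 : ∀ i : ι, (Real.sqrt (wt i) * g i x)^2 = wt i * (g i x)^2 := by
      intro i; rw [mul_pow, h2 i]
    simp only [h1, h2, h3, hw1, one_mul] at hCS
    have h4 : (δ*ρ)^2 ≤ (∑ i, wt i * g i x)^2 := by
      apply pow_le_pow_left₀ (by positivity) hx
    linarith
  -- upper bound for the partition part
  have hQ1up : ∀ x y : X, (∑ i, (wt i * (g i x - g i y)^2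
      + (if c i x = c i y then wt i * (g i x - g i y)^2
         else wt i * (g i x)^2 + wt i * (g i y)^2)))
      ≤ 2 * (min (dist x y) ρ)^2 := by
    intro x y
    have hper : ∀ i, wt i * (g i x - g i y)^2
        + (if c i x = c i y then wt i * (g i x - g i y)^2
           else wt i * (g i x)^2 + wt i * (g i y)^2)
        ≤ wt i * (2 * (min (dist x y) ρ)^2) := by
      intro i
      by_cases h : c i x = c i y
      · rw [if_pos h]
        have hΔ : (g i x - g i y)^2 ≤ (min (dist x y) ρ)^2 := by
          rw [← sq_abs]; exact pow_le_pow_left₀ (abs_nonneg _) (hg_lip i x y h) 2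
        calc wt i * (g i x - g i y)^2 + wt i * (g i x - g i y)^2
            = wt i * ((g i x - g i y)^2 + (g i x - g i y)^2) := by ring
          _ ≤ wt i * (2 * (min (dist x y) ρ)^2) :=
              mul_le_mul_of_nonneg_left (by linarith) (hw0 i)
      · rw [if_neg h]
        have hyx : y ∉ c i x := fun hy => h ((hpart i x y hy).symm)
        have hxy : x ∉ c i y := fun hx => h (hpart i y x hx)
        have h1 : g i x ≤ min (dist x y) ρ := hg_small i x y hyx
        have h2 : g i y ≤ min (dist x y) ρ := by
          have := hg_small i y x hxy
          rwa [dist_comm] at this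
        have hq := quad_bound (hg0 i x) (hg0 i y) h1 h2
        calc wt i * (g i x - g i y)^2 + (wt i * (g i x)^2 + wt i * (g i y)^2)
            = wt i * ((g i x - g i y)^2 + ((g i x)^2 + (g i y)^2)) := by ring
          _ ≤ wt i * (2 * (min (dist x y) ρ)^2) :=
              mul_le_mul_of_nonneg_left hq (hw0 i)
    calc (∑ i, (wt i * (g i x - g i y)^2
        + (if c i x = c i y then wt i * (g i x - g i y)^2
           else wt i * (g i x)^2 + wt i * (g i y)^2)))
        ≤ ∑ i, wt i * (2 * (min (dist x y) ρ)^2) := Finset.sum_le_sum (fun i _ => hper i)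
      _ = 2 * (min (dist x y) ρ)^2 := by rw [← Finset.sum_mul, hw1, one_mul]
  -- lower bounds for the partition part
  have hQ1lowx : ∀ x y : X, ρ < dist x y → δ * ρ ≤ ∑ i, wt i * g i x →
      (δ*ρ)^2 ≤ (∑ i, (wt i * (g i x - g i y)^2
      + (if c i x = c i y then wt i * (g i x - g i y)^2
         else wt i * (g i x)^2 + wt i * (g i y)^2))) := by
    intro x y hfar hx
    refine (hJensen x hx).trans (Finset.sum_le_sum fun i _ => ?_)
    rw [if_neg (hdiffblock x y hfar i)]
    have n1 := mul_nonneg (hw0 i) (sq_nonneg (g i x - g i y))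
    have n2 := mul_nonneg (hw0 i) (sq_nonneg (g i y))
    linarith
  have hQ1lowy : ∀ x y : X, ρ < dist x y → δ * ρ ≤ ∑ i, wt i * g i y →
      (δ*ρ)^2 ≤ (∑ i, (wt i * (g i x - g i y)^2
      + (if c i x = c i y then wt i * (g i x - g i y)^2
         else wt i * (g i x)^2 + wt i * (g i y)^2))) := by
    intro x y hfar hy
    refine (hJensen y hy).trans (Finset.sum_le_sum fun i _ => ?_)
    rw [if_neg (hdiffblock x y hfar i)]
    have n1 := mul_nonneg (hw0 i) (sq_nonneg (g i x - g i y))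
    have n2 := mul_nonneg (hw0 i) (sq_nonneg (g i x))
    linarith
  -- the embedding
  have hsq1 : ∀ (w A B : ℝ), 0 ≤ w →
      (Real.sqrt w * A - Real.sqrt w * B)^2 = w * (A - B)^2 := by
    intro w A B hw
    calc (Real.sqrt w * A - Real.sqrt w * B)^2
        = (Real.sqrt w * Real.sqrt w) * (A - B)^2 := by ring
      _ = w * (A - B)^2 := by rw [Real.mul_self_sqrt hw]
  have hsq2 : ∀ (w A : ℝ), 0 ≤ w → (Real.sqrt w * A)^2 = w * A^2 := by
    intro w A hw
    calc (Real.sqrt w * A)^2 = (Real.sqrt w * Real.sqrt w) * A^2 := by ring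
      _ = w * A^2 := by rw [Real.mul_self_sqrt hw]
  set f : X → ((ι × Option X) ⊕ X) → ℝ := fun x j =>
    match j with
    | Sum.inl (i, none) => Real.sqrt (wt i) * g i x
    | Sum.inl (i, some z) => if rep i x = z then Real.sqrt (wt i) * g i x else 0
    | Sum.inr z => if L z then Real.sqrt 2 * ψ z x else 0
    with hfdef
  set φ : X → EuclideanSpace ℝ ((ι × Option X) ⊕ X) := fun x => WithLp.toLp 2 (f x) with hφdef
  have happ : ∀ (x y : X) (j : (ι × Option X) ⊕ X), (φ x - φ y) j = f x j - f y j :=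
    fun x y j => rfl
  have hnorm : ∀ x y : X, ‖φ x - φ y‖
      = Real.sqrt ((∑ i, (wt i * (g i x - g i y)^2
          + (if c i x = c i y then wt i * (g i x - g i y)^2
             else wt i * (g i x)^2 + wt i * (g i y)^2)))
        + ∑ z, ((if L z then Real.sqrt 2 * ψ z x else 0)
            - (if L z then Real.sqrt 2 * ψ z y else 0))^2) := by
    intro x y
    rw [EuclideanSpace.norm_eq]
    congr 1
    have hsq : ∀ j, ‖(φ x - φ y) j‖^2 = (f x j - f y j)^2 := by
      intro j; rw [happ x y j, Real.norm_eq_abs, sq_abs]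
    rw [Finset.sum_congr rfl (fun j _ => hsq j), Fintype.sum_sum_type]
    congr 1
    · rw [Fintype.sum_prod_type]
      refine Finset.sum_congr rfl fun i _ => ?_
      rw [Fintype.sum_option]
      have hnx : f x (Sum.inl (i, none)) = Real.sqrt (wt i) * g i x := rfl
      have hny : f y (Sum.inl (i, none)) = Real.sqrt (wt i) * g i y := rfl
      have hsx : ∀ z, f x (Sum.inl (i, some z))
          = if rep i x = z then Real.sqrt (wt i) * g i x else 0 := fun z => rfl
      have hsy : ∀ z, f y (Sum.inl (i, some z))
          = if rep i y = z then Real.sqrt (wt i) * g i y else 0 := fun z => rfl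
      rw [hnx, hny]
      rw [Finset.sum_congr rfl (fun z _ => by rw [hsx z, hsy z])]
      rw [sum_two_ite (rep i x) (rep i y) (Real.sqrt (wt i) * g i x) (Real.sqrt (wt i) * g i y)]
      rw [hsq1 _ _ _ (hw0 i)]
      by_cases hc : c i x = c i y
      · rw [if_pos ((hrep_iff i x y).2 hc), if_pos hc]
      · rw [if_neg (fun h => hc ((hrep_iff i x y).1 h)), if_neg hc,
          hsq2 _ _ (hw0 i), hsq2 _ _ (hw0 i)]
  refine ⟨EuclideanSpace ℝ ((ι × Option X) ⊕ X), inferInstance, inferInstance, inferInstance,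
    φ, fun x y => ⟨?_, ?_⟩⟩
  · rw [hnorm x y]
    have h1 := hQ1up x y
    have h2 := hQ2up x y
    have hm0 : 0 ≤ min (dist x y) ρ := le_min dist_nonneg hρ.le
    have hle : (∑ i, (wt i * (g i x - g i y)^2
          + (if c i x = c i y then wt i * (g i x - g i y)^2
             else wt i * (g i x)^2 + wt i * (g i y)^2)))
        + (∑ z, ((if L z then Real.sqrt 2 * ψ z x else 0)
            - (if L z then Real.sqrt 2 * ψ z y else 0))^2)
        ≤ (2 * min (dist x y) ρ)^2 := by
      have h3 : (2 * min (dist x y) ρ)^2 = 4 * (min (dist x y) ρ)^2 := by ring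
      linarith
    calc Real.sqrt _ ≤ Real.sqrt ((2 * min (dist x y) ρ)^2) := Real.sqrt_le_sqrt hle
      _ = 2 * min (dist x y) ρ := Real.sqrt_sq (by positivity)
  · intro hfar
    rw [hnorm x y]
    have hδρ0 : (0:ℝ) ≤ δ * ρ := by positivity
    have hQ2n : (0:ℝ) ≤ ∑ z, ((if L z then Real.sqrt 2 * ψ z x else 0)
        - (if L z then Real.sqrt 2 * ψ z y else 0))^2 :=
      Finset.sum_nonneg fun z _ => sq_nonneg _
    have hQ1n : (0:ℝ) ≤ (∑ i, (wt i * (g i x - g i y)^2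
          + (if c i x = c i y then wt i * (g i x - g i y)^2
             else wt i * (g i x)^2 + wt i * (g i y)^2))) := by
      refine Finset.sum_nonneg fun i _ => ?_
      refine add_nonneg (mul_nonneg (hw0 i) (sq_nonneg _)) ?_
      by_cases h : c i x = c i y
      · rw [if_pos h]; exact mul_nonneg (hw0 i) (sq_nonneg _)
      · rw [if_neg h]
        exact add_nonneg (mul_nonneg (hw0 i) (sq_nonneg _)) (mul_nonneg (hw0 i) (sq_nonneg _))
    have hkey : (δ*ρ)^2 ≤ (∑ i, (wt i * (g i x - g i y)^2
          + (if c i x = c i y then wt i * (g i x - g i y)^2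
             else wt i * (g i x)^2 + wt i * (g i y)^2)))
        + ∑ z, ((if L z then Real.sqrt 2 * ψ z x else 0)
            - (if L z then Real.sqrt 2 * ψ z y else 0))^2 := by
      rcases hPS x with hx | hx
      · have := hQ1lowx x y hfar hx; linarith
      · rcases hPS y with hy | hy
        · have := hQ1lowy x y hfar hy; linarith
        · have h2 := hQ2low x y hx hy hfar
          have hδρρ : δ * ρ ≤ ρ := mul_le_of_le_one_left hρ.le hδ1
          have h3 : (δ*ρ)^2 ≤ ρ^2 := pow_le_pow_left₀ hδρ0 hδρρ 2
          linarith
    calc δ * ρ = Real.sqrt ((δ*ρ)^2) := (Real.sqrt_sq hδρ0).symm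
      _ ≤ Real.sqrt _ := Real.sqrt_le_sqrt hkey
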